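/- arXiv:1006.5876 — 7 statements merged into one kernel-verified Lean document; each statement's English description precedes it below -/
import Mathlib

section
/- With the same setup, the minimum eigenvalue of P_m is at most p(θ) for every real θ. -/
open Matrix Real Complex Finset

/-- The trigonometric polynomial `p(θ) = p₀ + Σ_{k=1}^n 2 p_k cos(kθ)`. -/
noncomputable def trigPoly (n : ℕ) (p : ℕ → ℝ) (θ : ℝ) : ℝ :=
  p 0 + ∑ k ∈ Finset.Icc 1 n, 2 * p k * Real.cos (k * θ)

/-- The `m × m` weighted symmetric banded Toeplitz matrix with `(j,k)` entry
`(m/(m-|j-k|)) p_{|j-k|}` for `|j-k| ≤ n`, else `0`. -/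
noncomputable def Pmat (n m : ℕ) (p : ℕ → ℝ) : Matrix (Fin m) (Fin m) ℝ :=
  fun j k =>
    if ((j : ℤ) - (k : ℤ)).natAbs ≤ n then
      ((m : ℝ) / ((m : ℝ) - (((j : ℤ) - (k : ℤ)).natAbs : ℝ))) * p ((( j : ℤ) - (k : ℤ)).natAbs)
    else 0

/-- weight function -/
noncomputable def wfun (m : ℕ) (p : ℕ → ℝ) (θ : ℝ) (d : ℕ) : ℝ :=
  ((m : ℝ) / ((m : ℝ) - (d : ℝ))) * p d * Real.cos ((d : ℝ) * θ)

lemma count_sum (m d : ℕ) (c : ℝ) :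
    (∑ k ∈ Finset.range m, if k + d < m then c else 0) = ((m - d : ℕ) : ℝ) * c := by
  have h : ∀ k, (if k + d < m then c else 0) = (if k ∈ Finset.range (m - d) then c else 0) := by
    intro k
    have : (k + d < m) ↔ k ∈ Finset.range (m - d) := by rw [Finset.mem_range]; omega
    rw [if_congr this rfl rfl]
  rw [Finset.sum_congr rfl fun k _ => h k, Finset.sum_ite_mem,
    Finset.inter_eq_right.mpr (Finset.range_subset_range.mpr (by omega)), Finset.sum_const,
    Finset.card_range, nsmul_eq_mul]

lemma pointwise (n m : ℕ) (p : ℕ → ℝ) (θ : ℝ) (j k : ℕ) :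
    (if ((j : ℤ) - (k : ℤ)).natAbs ≤ n then
        ((m : ℝ) / ((m : ℝ) - ((((j : ℤ) - (k : ℤ)).natAbs : ℕ) : ℝ))) *
          p (((j : ℤ) - (k : ℤ)).natAbs) else 0)
      * Real.cos ((((j : ℤ) - (k : ℤ) : ℤ) : ℝ) * θ)
    = (∑ d ∈ Finset.range (n + 1), if j = k + d then wfun m p θ d else 0)
      + (∑ d ∈ Finset.Icc 1 n, if k = j + d then wfun m p θ d else 0) := by
  rcases le_or_gt k j with h | h
  · set D := j - k with hD
    have h1 : ((j : ℤ) - (k : ℤ)) = (D : ℤ) := by omega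
    have h2 : ((j : ℤ) - (k : ℤ)).natAbs = D := by omega
    have hsum2 : (∑ d ∈ Finset.Icc 1 n, if k = j + d then wfun m p θ d else 0) = 0 := by
      apply Finset.sum_eq_zero
      intro d hd
      rw [Finset.mem_Icc] at hd
      rw [if_neg (by omega)]
    have hsum1 : (∑ d ∈ Finset.range (n + 1), if j = k + d then wfun m p θ d else 0)
        = if D ∈ Finset.range (n + 1) then wfun m p θ D else 0 := by
      rw [← Finset.sum_ite_eq' (Finset.range (n + 1)) D (fun d => wfun m p θ d)]
      apply Finset.sum_congr rfl
      intro d _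
      have : (j = k + d) ↔ (d = D) := by omega
      rw [if_congr this rfl rfl]
    rw [hsum1, hsum2, add_zero, h2, h1]
    simp only [Finset.mem_range, Nat.lt_succ_iff]
    by_cases hDn : D ≤ n
    · rw [if_pos hDn, if_pos hDn]; unfold wfun; push_cast; ring
    · rw [if_neg hDn, if_neg hDn, zero_mul]
  · set E := k - j with hE
    have hE1 : 1 ≤ E := by omega
    have h1 : ((j : ℤ) - (k : ℤ)) = -(E : ℤ) := by omega
    have h2 : ((j : ℤ) - (k : ℤ)).natAbs = E := by omega
    have hsum1 : (∑ d ∈ Finset.range (n + 1), if j = k + d then wfun m p θ d else 0) = 0 := by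
      apply Finset.sum_eq_zero
      intro d _
      rw [if_neg (by omega)]
    have hsum2 : (∑ d ∈ Finset.Icc 1 n, if k = j + d then wfun m p θ d else 0)
        = if E ∈ Finset.Icc 1 n then wfun m p θ E else 0 := by
      rw [← Finset.sum_ite_eq' (Finset.Icc 1 n) E (fun d => wfun m p θ d)]
      apply Finset.sum_congr rfl
      intro d _
      have : (k = j + d) ↔ (d = E) := by omega
      rw [if_congr this rfl rfl]
    rw [hsum1, hsum2, zero_add, h2, h1]
    simp only [Finset.mem_Icc]
    have hcos : Real.cos (((-(E : ℤ) : ℤ) : ℝ) * θ) = Real.cos ((E : ℝ) * θ) := by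
      push_cast
      rw [neg_mul, Real.cos_neg]
    rw [hcos]
    by_cases hEn : E ≤ n
    · rw [if_pos hEn, if_pos ⟨hE1, hEn⟩]; unfold wfun; ring
    · rw [if_neg hEn, if_neg (fun h => hEn h.2), zero_mul]

lemma double_count (m : ℕ) (s : Finset ℕ) (w : ℕ → ℝ) :
    (∑ j ∈ Finset.range m, ∑ k ∈ Finset.range m,
      ∑ d ∈ s, if j = k + d then w d else 0)
    = ∑ d ∈ s, ((m - d : ℕ) : ℝ) * w d := by
  rw [Finset.sum_comm]
  calc ∑ k ∈ Finset.range m, ∑ j ∈ Finset.range m, ∑ d ∈ s, (if j = k + d then w d else 0)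
      = ∑ k ∈ Finset.range m, ∑ d ∈ s, ∑ j ∈ Finset.range m,
          (if j = k + d then w d else 0) := by
        exact Finset.sum_congr rfl fun k _ => Finset.sum_comm
    _ = ∑ k ∈ Finset.range m, ∑ d ∈ s, (if k + d < m then w d else 0) := by
        refine Finset.sum_congr rfl fun k _ => Finset.sum_congr rfl fun d _ => ?_
        rw [Finset.sum_ite_eq' (Finset.range m) (k + d) (fun _ => w d)]
        simp only [Finset.mem_range]
    _ = ∑ d ∈ s, ∑ k ∈ Finset.range m, (if k + d < m then w d else 0) := Finset.sum_comm
    _ = ∑ d ∈ s, ((m - d : ℕ) : ℝ) * w d :=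
        Finset.sum_congr rfl fun d _ => count_sum m d (w d)

lemma key_sum (n m : ℕ) (hmn : n < m) (p : ℕ → ℝ) (θ : ℝ) :
    ∑ j ∈ Finset.range m, ∑ k ∈ Finset.range m,
      ((if ((j : ℤ) - (k : ℤ)).natAbs ≤ n then
        ((m : ℝ) / ((m : ℝ) - ((((j : ℤ) - (k : ℤ)).natAbs : ℕ) : ℝ))) *
          p (((j : ℤ) - (k : ℤ)).natAbs) else 0)
        * Real.cos ((((j : ℤ) - (k : ℤ) : ℤ) : ℝ) * θ))
    = (m : ℝ) * trigPoly n p θ := by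
  have hw : ∀ d : ℕ, d ≤ n → ((m - d : ℕ) : ℝ) * wfun m p θ d
      = (m : ℝ) * (p d * Real.cos ((d : ℝ) * θ)) := by
    intro d hd
    have hdm : d < m := lt_of_le_of_lt hd hmn
    have h1 : ((m - d : ℕ) : ℝ) = (m : ℝ) - (d : ℝ) := by
      push_cast [Nat.cast_sub (le_of_lt hdm)]; ring
    have h2 : (m : ℝ) - (d : ℝ) ≠ 0 := by
      have : (d : ℝ) < (m : ℝ) := by exact_mod_cast hdm
      linarith
    rw [h1]
    unfold wfun
    field_simp
  calc ∑ j ∈ Finset.range m, ∑ k ∈ Finset.range m,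
      ((if ((j : ℤ) - (k : ℤ)).natAbs ≤ n then
        ((m : ℝ) / ((m : ℝ) - ((((j : ℤ) - (k : ℤ)).natAbs : ℕ) : ℝ))) *
          p (((j : ℤ) - (k : ℤ)).natAbs) else 0)
        * Real.cos ((((j : ℤ) - (k : ℤ) : ℤ) : ℝ) * θ))
      = ∑ j ∈ Finset.range m, ∑ k ∈ Finset.range m,
        ((∑ d ∈ Finset.range (n + 1), if j = k + d then wfun m p θ d else 0)
          + (∑ d ∈ Finset.Icc 1 n, if k = j + d then wfun m p θ d else 0)) := by
        exact Finset.sum_congr rfl fun j _ => Finset.sum_congr rfl fun k _ =>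
          pointwise n m p θ j k
    _ = (∑ j ∈ Finset.range m, ∑ k ∈ Finset.range m,
          ∑ d ∈ Finset.range (n + 1), if j = k + d then wfun m p θ d else 0)
        + (∑ j ∈ Finset.range m, ∑ k ∈ Finset.range m,
          ∑ d ∈ Finset.Icc 1 n, if k = j + d then wfun m p θ d else 0) := by
        simp only [Finset.sum_add_distrib]
    _ = (∑ d ∈ Finset.range (n + 1), ((m - d : ℕ) : ℝ) * wfun m p θ d)
        + (∑ d ∈ Finset.Icc 1 n, ((m - d : ℕ) : ℝ) * wfun m p θ d) := by
        rw [double_count, Finset.sum_comm, double_count]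
    _ = (∑ d ∈ Finset.range (n + 1), (m : ℝ) * (p d * Real.cos ((d : ℝ) * θ)))
        + (∑ d ∈ Finset.Icc 1 n, (m : ℝ) * (p d * Real.cos ((d : ℝ) * θ))) := by
        congr 1
        · exact Finset.sum_congr rfl fun d hd =>
            hw d (Nat.lt_succ_iff.mp (Finset.mem_range.mp hd))
        · exact Finset.sum_congr rfl fun d hd => hw d (Finset.mem_Icc.mp hd).2
    _ = (m : ℝ) * trigPoly n p θ := by
        have hIcc : ∀ f : ℕ → ℝ, ∑ d ∈ Finset.Icc 1 n, f d
            = ∑ i ∈ Finset.range n, f (i + 1) := by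
          intro f
          rw [← Finset.Ico_add_one_right_eq_Icc, Finset.sum_Ico_eq_sum_range]
          exact Finset.sum_congr rfl fun i _ => by rw [add_comm]
        rw [Finset.sum_range_succ']
        unfold trigPoly
        rw [hIcc, hIcc, mul_add, Finset.mul_sum]
        rw [Finset.sum_congr rfl (fun i _ =>
          show (m : ℝ) * (2 * p (i + 1) * Real.cos ((↑(i + 1) : ℝ) * θ))
              = 2 * ((m : ℝ) * (p (i + 1) * Real.cos ((↑(i + 1) : ℝ) * θ))) from by ring),
          Nat.cast_zero, zero_mul, Real.cos_zero]
        simp only [two_mul, Finset.sum_add_distrib]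
        ring

/-- The minimum eigenvalue of `P_m` is at most `p(θ)` for every `θ`. -/
theorem stmt1 (n m : ℕ) (hmn : n < m) (p : ℕ → ℝ)
    (hA : (Pmat n m p).IsHermitian) (θ : ℝ) :
    (⨅ i : Fin m, hA.eigenvalues i) ≤ trigPoly n p θ := by
  have hm : 0 < m := lt_of_le_of_lt (Nat.zero_le n) hmn
  haveI : Nonempty (Fin m) := ⟨⟨0, hm⟩⟩
  set c := ⨅ i, hA.eigenvalues i with hcdef
  have hc_le : ∀ i, c ≤ hA.eigenvalues i := fun i =>
    ciInf_le (Set.Finite.bddBelow (Set.finite_range _)) i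
  -- positive semidefiniteness of A - c • 1
  have hpsd : (Pmat n m p - c • (1 : Matrix (Fin m) (Fin m) ℝ)).PosSemidef := by
    set U : Matrix (Fin m) (Fin m) ℝ := (hA.eigenvectorUnitary : Matrix (Fin m) (Fin m) ℝ)
      with hUdef
    have hU : U * star U = 1 := (Matrix.mem_unitaryGroup_iff).mp hA.eigenvectorUnitary.2
    have hspec : Pmat n m p = U * Matrix.diagonal (RCLike.ofReal ∘ hA.eigenvalues) * star U :=
      hA.spectral_theorem
    have h1 : c • (1 : Matrix (Fin m) (Fin m) ℝ)
        = U * (c • (1 : Matrix (Fin m) (Fin m) ℝ)) * star U := by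
      rw [Matrix.mul_smul, Matrix.smul_mul, Matrix.mul_one, hU]
    have h2 : Pmat n m p - c • (1 : Matrix (Fin m) (Fin m) ℝ)
        = U * (Matrix.diagonal (fun i => hA.eigenvalues i - c)) * star U := by
      calc Pmat n m p - c • (1 : Matrix (Fin m) (Fin m) ℝ)
          = U * Matrix.diagonal (RCLike.ofReal ∘ hA.eigenvalues) * star U
            - U * (c • (1 : Matrix (Fin m) (Fin m) ℝ)) * star U := by rw [← hspec, ← h1]
        _ = U * (Matrix.diagonal (fun i => hA.eigenvalues i - c)) * star U := by
            rw [← Matrix.sub_mul, ← Matrix.mul_sub, Matrix.smul_one_eq_diagonal,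
              ← Matrix.diagonal_sub]
            rfl
    rw [h2]
    exact (Matrix.posSemidef_diagonal_iff.mpr fun i => sub_nonneg.mpr
      (hc_le i)).mul_mul_conjTranspose_same U
  -- Rayleigh quotient bound
  have key : ∀ v : Fin m → ℝ, c * (v ⬝ᵥ v) ≤ v ⬝ᵥ (Pmat n m p *ᵥ v) := by
    intro v
    have h0 := hpsd.dotProduct_mulVec_nonneg v
    rw [Matrix.sub_mulVec, dotProduct_sub, Matrix.smul_mulVec,
      Matrix.one_mulVec, dotProduct_smul, star_trivial, smul_eq_mul] at h0
    linarith
  -- test vectors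
  set x : Fin m → ℝ := fun j => Real.cos ((j : ℕ) * θ) with hx
  set y : Fin m → ℝ := fun j => Real.sin ((j : ℕ) * θ) with hy
  have hnorm : x ⬝ᵥ x + y ⬝ᵥ y = (m : ℝ) := by
    unfold dotProduct
    rw [← Finset.sum_add_distrib]
    have : ∀ j : Fin m, x j * x j + y j * y j = 1 := by
      intro j
      have := Real.sin_sq_add_cos_sq ((j : ℕ) * θ)
      simp only [hx, hy]
      nlinarith [this]
    rw [Finset.sum_congr rfl fun j _ => this j, Finset.sum_const, Finset.card_univ,
      Fintype.card_fin, nsmul_eq_mul, mul_one]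
  have hquad : x ⬝ᵥ (Pmat n m p *ᵥ x) + y ⬝ᵥ (Pmat n m p *ᵥ y) = (m : ℝ) * trigPoly n p θ := by
    have hdp : ∀ v : Fin m → ℝ, v ⬝ᵥ (Pmat n m p *ᵥ v)
        = ∑ j : Fin m, ∑ k : Fin m, Pmat n m p j k * (v j * v k) := by
      intro v
      simp only [dotProduct, Matrix.mulVec, Finset.mul_sum]
      exact Finset.sum_congr rfl fun j _ => Finset.sum_congr rfl fun k _ => by ring
    rw [hdp, hdp, ← Finset.sum_add_distrib]
    simp only [← Finset.sum_add_distrib]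
    have hterm : ∀ j k : Fin m,
        Pmat n m p j k * (x j * x k) + Pmat n m p j k * (y j * y k)
        = (if ((( j : ℕ) : ℤ) - ((k : ℕ) : ℤ)).natAbs ≤ n then
            ((m : ℝ) / ((m : ℝ) - (((((j : ℕ) : ℤ) - ((k : ℕ) : ℤ)).natAbs : ℕ) : ℝ))) *
              p ((((j : ℕ) : ℤ) - ((k : ℕ) : ℤ)).natAbs) else 0)
          * Real.cos (((((j : ℕ) : ℤ) - ((k : ℕ) : ℤ) : ℤ) : ℝ) * θ) := by
      intro j k
      have hcast : ((j : ℤ) - (k : ℤ)) = (((j : ℕ) : ℤ) - ((k : ℕ) : ℤ)) := rfl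
      have hcos : Real.cos (((((j : ℕ) : ℤ) - ((k : ℕ) : ℤ) : ℤ) : ℝ) * θ)
          = x j * x k + y j * y k := by
        simp only [hx, hy]
        push_cast
        rw [sub_mul, Real.cos_sub]
      rw [hcos]
      unfold Pmat
      rw [hcast]
      ring
    rw [Finset.sum_congr rfl fun j _ => Finset.sum_congr rfl fun k _ => hterm j k]
    rw [← key_sum n m hmn p θ]
    rw [← Fin.sum_univ_eq_sum_range (fun j => ∑ k ∈ Finset.range m,
      (if ((( j : ℕ) : ℤ) - ((k : ℕ) : ℤ)).natAbs ≤ n then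
            ((m : ℝ) / ((m : ℝ) - (((((j : ℕ) : ℤ) - ((k : ℕ) : ℤ)).natAbs : ℕ) : ℝ))) *
              p ((((j : ℕ) : ℤ) - ((k : ℕ) : ℤ)).natAbs) else 0)
          * Real.cos (((((j : ℕ) : ℤ) - ((k : ℕ) : ℤ) : ℤ) : ℝ) * θ)) m]
    exact Finset.sum_congr rfl fun j _ => Fin.sum_univ_eq_sum_range
      (fun k => (if ((( (j : ℕ)) : ℤ) - ((k : ℕ) : ℤ)).natAbs ≤ n then
            ((m : ℝ) / ((m : ℝ) - ((((((j : ℕ)) : ℤ) - ((k : ℕ) : ℤ)).natAbs : ℕ) : ℝ))) *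
              p (((((j : ℕ)) : ℤ) - ((k : ℕ) : ℤ)).natAbs) else 0)
          * Real.cos ((((((j : ℕ)) : ℤ) - ((k : ℕ) : ℤ) : ℤ) : ℝ) * θ)) m
  have h1 := key x
  have h2 := key y
  have hfin : c * (m : ℝ) ≤ (m : ℝ) * trigPoly n p θ := by
    calc c * (m : ℝ) = c * (x ⬝ᵥ x) + c * (y ⬝ᵥ y) := by rw [← mul_add, hnorm]
      _ ≤ x ⬝ᵥ (Pmat n m p *ᵥ x) + y ⬝ᵥ (Pmat n m p *ᵥ y) := add_le_add h1 h2
      _ = (m : ℝ) * trigPoly n p θ := hquad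
  have hm' : (0 : ℝ) < (m : ℝ) := by exact_mod_cast hm
  nlinarith [hfin]
end

section
/- As m → ∞, the minimum eigenvalue of the weighted Toeplitz matrix P_m converges to the minimum of p over the circle: lim_{m→∞} λ_min(P_m) = min_θ p(θ). -/
open Matrix Real Finset Filter Topology

noncomputable def eN (N : ℕ) (t : ℤ) : ℂ := Complex.exp (2 * Real.pi * Complex.I * t / N)

lemma eN_pow (N : ℕ) (d : ℤ) (l : ℕ) : eN N (d * l) = (eN N d) ^ l := by
  rw [eN, eN, ← Complex.exp_nat_mul]
  congr 1
  push_cast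
  ring

lemma eN_orth (N : ℕ) (hN : 0 < N) (d : ℤ) :
    ∑ l ∈ Finset.range N, eN N (d * l) = if (N : ℤ) ∣ d then (N : ℂ) else 0 := by
  by_cases hdvd : (N : ℤ) ∣ d
  · obtain ⟨c, rfl⟩ := hdvd
    have h1 : ∀ l : ℕ, eN N ((N : ℤ) * c * l) = 1 := by
      intro l
      rw [eN]
      have : (2 * Real.pi * Complex.I * ((N:ℤ) * c * l : ℤ) / N : ℂ)
          = ((c * l : ℤ) : ℂ) * (2 * Real.pi * Complex.I) := by
        have hN0 : (N : ℂ) ≠ 0 := by exact_mod_cast Nat.cast_ne_zero.mpr hN.ne'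
        field_simp
        push_cast
        ring
      rw [this, Complex.exp_int_mul_two_pi_mul_I]
    simp [h1, Dvd.intro c rfl]
  · have hz1 : eN N d ≠ 1 := by
      intro h
      rw [eN, Complex.exp_eq_one_iff] at h
      obtain ⟨k, hk⟩ := h
      apply hdvd
      refine ⟨k, ?_⟩
      have hN0 : (N : ℂ) ≠ 0 := by exact_mod_cast Nat.cast_ne_zero.mpr hN.ne'
      have hI : (Complex.I : ℂ) ≠ 0 := Complex.I_ne_zero
      have hpi : (Real.pi : ℂ) ≠ 0 := by exact_mod_cast Real.pi_ne_zero
      have h3 : (d : ℂ) = N * k := by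
        rw [div_eq_iff hN0] at hk
        have h2 : (2 : ℂ) * Real.pi * Complex.I ≠ 0 := by
          simp [hpi, hI]
        apply mul_left_cancel₀ h2
        rw [show (2 : ℂ) * Real.pi * Complex.I * (N * k) = k * (2 * Real.pi * Complex.I) * N by ring]
        exact_mod_cast hk
      exact_mod_cast h3
    have hzN : (eN N d) ^ N = 1 := by
      rw [← eN_pow]
      rw [eN]
      have hN0 : (N : ℂ) ≠ 0 := by exact_mod_cast Nat.cast_ne_zero.mpr hN.ne'
      have : (2 * Real.pi * Complex.I * ((d * N : ℤ) : ℂ) / N : ℂ)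
          = (d : ℂ) * (2 * Real.pi * Complex.I) := by
        field_simp
        push_cast
        ring
      rw [this]
      exact_mod_cast Complex.exp_int_mul_two_pi_mul_I d
    rw [if_neg hdvd]
    simp_rw [eN_pow]
    rw [geom_sum_eq hz1, hzN]
    simp


lemma Icc_succ (n : ℕ) :
    Finset.Icc (-((n:ℤ)+1)) ((n:ℤ)+1)
      = insert ((n:ℤ)+1) (insert (-((n:ℤ)+1)) (Finset.Icc (-(n:ℤ)) n)) := by
  ext a
  simp only [Finset.mem_Icc, Finset.mem_insert]
  omega

lemma tp_real (p : ℕ → ℝ) (θ : ℝ) (n : ℕ) :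
    ∑ d ∈ Finset.Icc (-(n:ℤ)) (n:ℤ), p d.natAbs * Real.cos (d * θ) = trigPoly n p θ := by
  induction n with
  | zero => simp [trigPoly]
  | succ n ih =>
    have h1 : ((n:ℤ)+1) ∉ insert (-((n:ℤ)+1)) (Finset.Icc (-(n:ℤ)) (n:ℤ)) := by
      simp only [Finset.mem_insert, Finset.mem_Icc]; omega
    have h2 : (-((n:ℤ)+1)) ∉ Finset.Icc (-(n:ℤ)) (n:ℤ) := by
      simp only [Finset.mem_Icc]; omega
    rw [show ((n+1 : ℕ):ℤ) = (n:ℤ)+1 by push_cast; ring] at *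
    rw [Icc_succ, Finset.sum_insert h1, Finset.sum_insert h2, ih]
    have h3 : Finset.Icc 1 (n+1) = insert (n+1) (Finset.Icc 1 n) := by
      ext a; simp only [Finset.mem_Icc, Finset.mem_insert]; omega
    rw [trigPoly, trigPoly, h3, Finset.sum_insert (by simp)]
    have hna : ((n:ℤ)+1).natAbs = n+1 := by omega
    have hnb : (-((n:ℤ)+1)).natAbs = n+1 := by omega
    rw [hna, hnb]
    have : Real.cos ((-((n:ℤ)+1) : ℤ) * θ) = Real.cos ((((n:ℤ)+1) : ℤ) * θ) := by
      push_cast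
      rw [show (-((n:ℝ)+1)) * θ = -(((n:ℝ)+1) * θ) by ring, Real.cos_neg]
    rw [this]
    push_cast
    ring

lemma tp_complex (p : ℕ → ℝ) (θ : ℝ) (n : ℕ) :
    ∑ d ∈ Finset.Icc (-(n:ℤ)) (n:ℤ), (p d.natAbs : ℂ) * Complex.exp (Complex.I * d * θ)
      = ((trigPoly n p θ : ℝ) : ℂ) := by
  induction n with
  | zero => simp [trigPoly]
  | succ n ih =>
    have h1 : ((n:ℤ)+1) ∉ insert (-((n:ℤ)+1)) (Finset.Icc (-(n:ℤ)) (n:ℤ)) := by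
      simp only [Finset.mem_insert, Finset.mem_Icc]; omega
    have h2 : (-((n:ℤ)+1)) ∉ Finset.Icc (-(n:ℤ)) (n:ℤ) := by
      simp only [Finset.mem_Icc]; omega
    rw [show ((n+1 : ℕ):ℤ) = (n:ℤ)+1 by push_cast; ring] at *
    rw [Icc_succ, Finset.sum_insert h1, Finset.sum_insert h2, ih]
    have h3 : Finset.Icc 1 (n+1) = insert (n+1) (Finset.Icc 1 n) := by
      ext a; simp only [Finset.mem_Icc, Finset.mem_insert]; omega
    rw [trigPoly, trigPoly, h3, Finset.sum_insert (by simp)]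
    have hna : ((n:ℤ)+1).natAbs = n+1 := by omega
    have hnb : (-((n:ℤ)+1)).natAbs = n+1 := by omega
    rw [hna, hnb]
    have key : Complex.exp (Complex.I * (((n:ℤ)+1) : ℤ) * θ)
        + Complex.exp (Complex.I * ((-((n:ℤ)+1)) : ℤ) * θ)
        = 2 * ((Real.cos (((n:ℕ)+1) * θ) : ℝ) : ℂ) := by
      rw [Complex.ofReal_cos]
      push_cast
      rw [show Complex.I * ((n:ℂ)+1) * θ = (((n:ℂ)+1) * θ) * Complex.I by ring,
        show Complex.I * (-((n:ℂ)+1)) * θ = (-(((n:ℂ)+1) * θ)) * Complex.I by ring,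
        Complex.exp_mul_I, Complex.exp_mul_I, Complex.cos_neg, Complex.sin_neg]
      ring
    push_cast at key ⊢
    linear_combination key * (p (n+1) : ℂ)





lemma eN_add (N : ℕ) (s t : ℤ) : eN N (s + t) = eN N s * eN N t := by
  rw [eN, eN, eN, ← Complex.exp_add]
  congr 1
  push_cast
  ring

lemma eN_conj (N : ℕ) (t : ℤ) : (starRingEnd ℂ) (eN N t) = eN N (-t) := by
  rw [eN, eN, ← Complex.exp_conj]
  congr 1
  simp only [map_div₀, _root_.map_mul, Complex.conj_I, map_ofNat, Complex.conj_ofReal,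
    map_intCast, map_natCast]
  push_cast
  ring

noncomputable def Ffun (N m : ℕ) (x : Fin m → ℝ) (l : ℕ) : ℂ :=
  ∑ j : Fin m, (x j : ℂ) * eN N ((j : ℤ) * l)

lemma conj_Ffun (N m : ℕ) (x : Fin m → ℝ) (l : ℕ) :
    (starRingEnd ℂ) (Ffun N m x l) = ∑ j : Fin m, (x j : ℂ) * eN N (-((j : ℤ) * l)) := by
  rw [Ffun, map_sum]
  exact Finset.sum_congr rfl fun j _ => by rw [_root_.map_mul, eN_conj, Complex.conj_ofReal]

lemma claim0 (n m : ℕ) (hm : 0 < m) (x : Fin m → ℝ) :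
    ∑ l ∈ Finset.range (m+n), (starRingEnd ℂ) (Ffun (m+n) m x l) * Ffun (m+n) m x l
      = ((m+n : ℕ) : ℂ) * ∑ a : Fin m, ((x a : ℂ))^2 := by
  set N := m + n with hN
  have hNpos : 0 < N := by omega
  have step1 : ∀ l : ℕ, (starRingEnd ℂ) (Ffun N m x l) * Ffun N m x l
      = ∑ a : Fin m, ∑ b : Fin m, (x a : ℂ) * (x b : ℂ) * eN N ((-(a:ℤ) + b) * l) := by
    intro l
    rw [conj_Ffun, Ffun, Finset.sum_mul_sum]
    refine Finset.sum_congr rfl fun a _ => Finset.sum_congr rfl fun b _ => ?_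
    rw [show (-(a:ℤ) + b) * l = (-((a:ℤ)*l)) + (b:ℤ)*l by ring, eN_add]
    ring
  simp_rw [step1]
  rw [Finset.sum_comm]
  have : ∀ a : Fin m, ∑ l ∈ Finset.range N, ∑ b : Fin m,
      (x a : ℂ) * (x b : ℂ) * eN N ((-(a:ℤ) + b) * l)
      = ∑ b : Fin m, (x a : ℂ) * (x b : ℂ) * (if ((N:ℤ)) ∣ (-(a:ℤ) + b) then (N:ℂ) else 0) := by
    intro a
    rw [Finset.sum_comm]
    refine Finset.sum_congr rfl fun b _ => ?_
    rw [← Finset.mul_sum, eN_orth N hNpos]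
  simp_rw [this]
  have hdvd : ∀ a b : Fin m, ((N:ℤ) ∣ (-(a:ℤ) + b)) ↔ a = b := by
    intro a b
    constructor
    · intro h
      have hb := b.isLt
      have ha := a.isLt
      have habs : |(-(a:ℤ) + b)| < (N:ℤ) := by rw [abs_lt]; omega
      have := Int.eq_zero_of_abs_lt_dvd h habs
      have : (a:ℤ) = b := by omega
      exact Fin.ext (by exact_mod_cast this)
    · rintro rfl; simp
  rw [Finset.mul_sum]
  refine Finset.sum_congr rfl fun a _ => ?_
  rw [Finset.sum_eq_single a]
  · rw [if_pos ((hdvd a a).mpr rfl)]; ring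
  · intro b _ hba
    rw [if_neg (fun h => hba ((hdvd a b).mp h).symm), mul_zero]
  · intro h; exact absurd (Finset.mem_univ a) h

lemma claim1 (n m : ℕ) (hm : 0 < m) (p : ℕ → ℝ) (x : Fin m → ℝ) :
    ∑ l ∈ Finset.range (m+n), ((trigPoly n p (2*Real.pi*l/((m+n : ℕ) : ℝ)) : ℝ) : ℂ)
        * ((starRingEnd ℂ) (Ffun (m+n) m x l) * Ffun (m+n) m x l)
      = ((m+n : ℕ) : ℂ) * ∑ a : Fin m, ∑ b : Fin m,
          (if ((a:ℤ)-(b:ℤ)).natAbs ≤ n then (p (((a:ℤ)-(b:ℤ)).natAbs) : ℂ) else 0)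
            * (x a : ℂ) * (x b : ℂ) := by
  set N := m + n with hN
  have hNpos : 0 < N := by omega
  -- trig poly at grid point as sum of eN
  have htp : ∀ l : ℕ, ((trigPoly n p (2*Real.pi*l/N) : ℝ) : ℂ)
      = ∑ d ∈ Finset.Icc (-(n:ℤ)) (n:ℤ), (p d.natAbs : ℂ) * eN N (d * l) := by
    intro l
    rw [← tp_complex p (2*Real.pi*l/N) n]
    refine Finset.sum_congr rfl fun d _ => ?_
    congr 1
    rw [eN]
    congr 1
    push_cast
    ring
  have step1 : ∀ l : ℕ, ((trigPoly n p (2*Real.pi*l/N) : ℝ) : ℂ)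
        * ((starRingEnd ℂ) (Ffun N m x l) * Ffun N m x l)
      = ∑ d ∈ Finset.Icc (-(n:ℤ)) (n:ℤ), ∑ a : Fin m, ∑ b : Fin m,
          (p d.natAbs : ℂ) * (x a : ℂ) * (x b : ℂ) * eN N ((d - a + b) * l) := by
    intro l
    rw [htp, conj_Ffun, Ffun]
    simp_rw [Finset.sum_mul, Finset.mul_sum]
    refine Finset.sum_congr rfl fun d _ => Finset.sum_congr rfl fun a _ =>
      Finset.sum_congr rfl fun b _ => ?_
    rw [show ((d:ℤ) - a + b) * l = (d:ℤ)*l + (-((a:ℤ)*l)) + (b:ℤ)*l by ring, eN_add, eN_add]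
    ring
  simp_rw [step1]
  rw [Finset.sum_comm]
  have step2 : ∀ d ∈ Finset.Icc (-(n:ℤ)) (n:ℤ), ∑ l ∈ Finset.range N, ∑ a : Fin m, ∑ b : Fin m,
      (p d.natAbs : ℂ) * (x a : ℂ) * (x b : ℂ) * eN N ((d - a + b) * l)
      = ∑ a : Fin m, ∑ b : Fin m, (p d.natAbs : ℂ) * (x a : ℂ) * (x b : ℂ) *
          (if d = (a:ℤ) - b then (N:ℂ) else 0) := by
    intro d hd
    rw [Finset.sum_comm]
    refine Finset.sum_congr rfl fun a _ => ?_
    rw [Finset.sum_comm]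
    refine Finset.sum_congr rfl fun b _ => ?_
    rw [← Finset.mul_sum, eN_orth N hNpos]
    congr 1
    rw [Finset.mem_Icc] at hd
    have ha := a.isLt; have hb := b.isLt
    by_cases h : d = (a:ℤ) - b
    · rw [if_pos h, if_pos (show ((N:ℕ):ℤ) ∣ (d - a + b) by
        rw [show d - (a:ℤ) + b = 0 by omega]; exact dvd_zero _)]
    · rw [if_neg h, if_neg ?_]
      intro hdv
      have habs : |d - (a:ℤ) + b| < (N:ℤ) := by rw [abs_lt]; omega
      have := Int.eq_zero_of_abs_lt_dvd hdv habs
      omega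
  rw [Finset.sum_congr rfl step2, Finset.sum_comm]
  rw [Finset.mul_sum]
  refine Finset.sum_congr rfl fun a _ => ?_
  rw [Finset.sum_comm, Finset.mul_sum]
  refine Finset.sum_congr rfl fun b _ => ?_
  have ha := a.isLt; have hb := b.isLt
  by_cases hab : ((a:ℤ)-(b:ℤ)).natAbs ≤ n
  · rw [if_pos hab]
    rw [Finset.sum_eq_single ((a:ℤ) - b)]
    · rw [if_pos rfl]; ring
    · intro d _ hne; rw [if_neg hne, mul_zero]
    · intro hmem
      exfalso
      apply hmem
      rw [Finset.mem_Icc]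
      omega
  · rw [if_neg hab, zero_mul, zero_mul, mul_zero]
    apply Finset.sum_eq_zero
    intro d hd
    rw [Finset.mem_Icc] at hd
    rw [if_neg (by omega : ¬ d = (a:ℤ) - b), mul_zero]

lemma R_quad_lower (n m : ℕ) (hm : 0 < m) (p : ℕ → ℝ) (x : Fin m → ℝ)
    (hbdd : BddBelow (Set.range (trigPoly n p))) :
    (⨅ θ : ℝ, trigPoly n p θ) * ∑ a : Fin m, x a ^ 2
      ≤ ∑ a : Fin m, ∑ b : Fin m,
          (if ((a:ℤ)-(b:ℤ)).natAbs ≤ n then p (((a:ℤ)-(b:ℤ)).natAbs) else 0) * x a * x b := by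
  set N := m + n with hN
  set c := ⨅ θ : ℝ, trigPoly n p θ with hc
  set T : ℕ → ℝ := fun l => Complex.normSq (Ffun N m x l) with hT
  have hkey : ∑ l ∈ Finset.range N, trigPoly n p (2*Real.pi*l/((N : ℕ) : ℝ)) * T l
      = (N : ℝ) * ∑ a : Fin m, ∑ b : Fin m,
          (if ((a:ℤ)-(b:ℤ)).natAbs ≤ n then p (((a:ℤ)-(b:ℤ)).natAbs) else 0) * x a * x b := by
    have h1 := claim1 n m hm p x
    simp only [← Complex.normSq_eq_conj_mul_self] at h1
    have hcast : ∀ a b : Fin m, (if ((a:ℤ)-(b:ℤ)).natAbs ≤ n then (p (((a:ℤ)-(b:ℤ)).natAbs) : ℂ) else 0)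
        * ((x a : ℝ) : ℂ) * ((x b : ℝ) : ℂ)
        = (((if ((a:ℤ)-(b:ℤ)).natAbs ≤ n then p (((a:ℤ)-(b:ℤ)).natAbs) else 0) * x a * x b : ℝ) : ℂ) := by
      intro a b; split <;> simp
    simp only [hcast, ← Complex.ofReal_sum, ← Complex.ofReal_mul, ← Complex.ofReal_natCast] at h1
    exact_mod_cast h1
  have hpar : ∑ l ∈ Finset.range N, T l = (N : ℝ) * ∑ a : Fin m, x a ^ 2 := by
    have h0 := claim0 n m hm x
    simp only [← Complex.normSq_eq_conj_mul_self] at h0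
    exact_mod_cast h0
  have hNpos : (0:ℝ) < N := by positivity
  have hineq : (N : ℝ) * (c * ∑ a : Fin m, x a ^ 2)
      ≤ (N : ℝ) * ∑ a : Fin m, ∑ b : Fin m,
          (if ((a:ℤ)-(b:ℤ)).natAbs ≤ n then p (((a:ℤ)-(b:ℤ)).natAbs) else 0) * x a * x b := by
    rw [← hkey, show (N : ℝ) * (c * ∑ a : Fin m, x a ^ 2) = c * ((N:ℝ) * ∑ a : Fin m, x a ^ 2) by
      ring, ← hpar, Finset.mul_sum]
    refine Finset.sum_le_sum fun l _ => ?_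
    have hTnn : 0 ≤ T l := Complex.normSq_nonneg _
    exact mul_le_mul_of_nonneg_right (ciInf_le hbdd _) hTnn
  exact le_of_mul_le_mul_left hineq hNpos

lemma count_card (m : ℕ) (d : ℤ) (hd : d.natAbs < m) :
    (Finset.filter (fun jk : Fin m × Fin m => (jk.1:ℤ) - (jk.2:ℤ) = d) Finset.univ).card
      = m - d.natAbs := by
  rw [← Finset.card_range (m - d.natAbs)]
  apply Finset.card_bij' (i := fun (jk : Fin m × Fin m) _ => (jk.1 : ℕ) - d.toNat)
    (j := fun i hi =>
      (⟨i + d.toNat, by have := Finset.mem_range.mp hi; omega⟩,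
       ⟨i + (-d).toNat, by have := Finset.mem_range.mp hi; omega⟩))
  case hi =>
    intro a ha
    simp only [Finset.mem_filter, Finset.mem_univ, true_and] at ha
    simp only [Finset.mem_range]
    have h1 := a.1.isLt
    have h2 := a.2.isLt
    omega
  case hj =>
    intro i hi
    simp only [Finset.mem_filter, Finset.mem_univ, true_and]
    have := Finset.mem_range.mp hi
    omega
  case left_inv =>
    intro a ha
    simp only [Finset.mem_filter, Finset.mem_univ, true_and] at ha
    have h1 := a.1.isLt
    have h2 := a.2.isLt
    refine Prod.ext ?_ ?_ <;> apply Fin.ext <;> simp <;> omega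
  case right_inv =>
    intro i hi
    have := Finset.mem_range.mp hi
    show i + d.toNat - d.toNat = i
    omega

lemma sum_band (n m : ℕ) (hmn : n < m) (H : ℤ → ℝ) :
    ∑ j : Fin m, ∑ k : Fin m, (if ((j:ℤ)-(k:ℤ)).natAbs ≤ n then H ((j:ℤ)-(k:ℤ)) else 0)
      = ∑ d ∈ Finset.Icc (-(n:ℤ)) (n:ℤ), ((m - d.natAbs : ℕ) : ℝ) * H d := by
  rw [← Finset.sum_product']
  have step : ∀ jk : Fin m × Fin m,
      (if ((jk.1:ℤ)-(jk.2:ℤ)).natAbs ≤ n then H ((jk.1:ℤ)-(jk.2:ℤ)) else 0)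
      = ∑ d ∈ Finset.Icc (-(n:ℤ)) (n:ℤ), (if (jk.1:ℤ)-(jk.2:ℤ) = d then H d else 0) := by
    intro jk
    have h1 := jk.1.isLt
    have h2 := jk.2.isLt
    rw [Finset.sum_ite_eq (Finset.Icc (-(n:ℤ)) (n:ℤ)) ((jk.1:ℤ)-(jk.2:ℤ)) H]
    by_cases hc : ((jk.1:ℤ)-(jk.2:ℤ)).natAbs ≤ n
    · rw [if_pos hc, if_pos (by rw [Finset.mem_Icc]; omega)]
    · rw [if_neg hc, if_neg (by rw [Finset.mem_Icc]; omega)]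
  simp_rw [step]
  rw [Finset.sum_comm]
  refine Finset.sum_congr rfl fun d hd => ?_
  rw [Finset.mem_Icc] at hd
  rw [← Finset.sum_filter, Finset.sum_const, Finset.univ_product_univ, count_card m d (by omega)]
  simp [nsmul_eq_mul]

lemma dot_eq {m : ℕ} (A : Matrix (Fin m) (Fin m) ℝ) (x : Fin m → ℝ) :
    x ⬝ᵥ A *ᵥ x = ∑ j, ∑ k, A j k * x j * x k := by
  simp only [dotProduct, mulVec, dotProduct, Finset.mul_sum]
  exact Finset.sum_congr rfl fun j _ => Finset.sum_congr rfl fun k _ => by ring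

lemma quad_lower {m : ℕ} (A : Matrix (Fin m) (Fin m) ℝ) (hA : A.IsHermitian)
    (hm : 0 < m) (x : Fin m → ℝ) :
    (⨅ i, hA.eigenvalues i) * ∑ j, x j ^ 2 ≤ x ⬝ᵥ A *ᵥ x := by
  haveI : Nonempty (Fin m) := ⟨⟨0, hm⟩⟩
  set U : Matrix (Fin m) (Fin m) ℝ := (hA.eigenvectorUnitary : Matrix (Fin m) (Fin m) ℝ) with hU
  set y : Fin m → ℝ := star U *ᵥ x with hy
  have hsU : star U = Uᵀ := by
    rw [Matrix.star_eq_conjTranspose, Matrix.conjTranspose_eq_transpose_of_trivial]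
  have hUU : U * star U = 1 := (Matrix.mem_unitaryGroup_iff).mp (hA.eigenvectorUnitary).2
  have h1 : x ⬝ᵥ A *ᵥ x = ∑ i, hA.eigenvalues i * y i ^ 2 := by
    conv_lhs => rw [hA.spectral_theorem, Unitary.conjStarAlgAut_apply]
    rw [← Matrix.mulVec_mulVec, ← Matrix.mulVec_mulVec, Matrix.dotProduct_mulVec]
    have hvm : Matrix.vecMul x U = y := by
      rw [hy, hsU, ← Matrix.mulVec_transpose]
    rw [hvm]
    have hdiag : (Matrix.diagonal (RCLike.ofReal ∘ hA.eigenvalues) : Matrix (Fin m) (Fin m) ℝ) *ᵥ y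
        = fun i => hA.eigenvalues i * y i := by
      ext i
      simp [Matrix.mulVec_diagonal]
    rw [hdiag]
    simp only [dotProduct]
    exact Finset.sum_congr rfl fun i _ => by ring
  have h2 : ∑ j, x j ^ 2 = ∑ i, y i ^ 2 := by
    have : ∑ i, y i ^ 2 = y ⬝ᵥ y := by
      simp [dotProduct, sq]
    rw [this, hy]
    have hst : star U *ᵥ x = Matrix.vecMul x U := by
      rw [hsU, ← Matrix.mulVec_transpose]
    rw [hst, ← Matrix.dotProduct_mulVec, ← hst, Matrix.mulVec_mulVec, hUU, Matrix.one_mulVec]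
    simp [dotProduct, sq]
  rw [h1, h2, Finset.mul_sum]
  refine Finset.sum_le_sum fun i _ => ?_
  refine mul_le_mul_of_nonneg_right ?_ (sq_nonneg _)
  exact ciInf_le (Set.Finite.bddBelow (Set.finite_range _)) i

lemma eig_attained {m : ℕ} (A : Matrix (Fin m) (Fin m) ℝ) (hA : A.IsHermitian) (i : Fin m) :
    ∃ v : Fin m → ℝ, (∑ j, v j ^ 2 = 1) ∧ v ⬝ᵥ A *ᵥ v = hA.eigenvalues i := by
  have hnorm : ‖hA.eigenvectorBasis i‖ = 1 := hA.eigenvectorBasis.orthonormal.1 i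
  have h1 : ∑ j, (hA.eigenvectorBasis i) j ^ 2 = 1 := by
    have := EuclideanSpace.norm_eq (hA.eigenvectorBasis i)
    rw [this] at hnorm
    have h2 : ∑ j, ‖(hA.eigenvectorBasis i) j‖ ^ 2 = 1 := by
      have := congrArg (· ^ 2) hnorm
      simpa [Real.sq_sqrt (Finset.sum_nonneg fun j _ => sq_nonneg _)] using this
    simpa [Real.norm_eq_abs, sq_abs] using h2
  refine ⟨⇑(hA.eigenvectorBasis i), h1, ?_⟩
  rw [hA.mulVec_eigenvectorBasis]
  have : ⇑(hA.eigenvectorBasis i) ⬝ᵥ hA.eigenvalues i • ⇑(hA.eigenvectorBasis i)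
      = hA.eigenvalues i * ∑ j, (hA.eigenvectorBasis i) j ^ 2 := by
    simp [dotProduct, Finset.mul_sum, sq]
    exact Finset.sum_congr rfl fun j _ => by ring
  rw [this, h1, mul_one]

lemma band_card (n m : ℕ) (j : Fin m) :
    (Finset.univ.filter fun k : Fin m => ((j:ℤ)-(k:ℤ)).natAbs ≤ n).card ≤ 2*n+1 := by
  refine le_trans (Finset.card_le_card_of_injOn (t := Finset.Icc ((j:ℤ)-n) ((j:ℤ)+n))
    (fun k : Fin m => (k:ℤ)) ?_ ?_) ?_
  · intro k hk
    simp only [Finset.coe_filter, Finset.mem_coe, Set.mem_setOf_eq, Finset.mem_filter, Finset.mem_univ, true_and] at hk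
    dsimp only
    simp only [Finset.mem_coe, Finset.mem_Icc]
    omega
  · intro k₁ _ k₂ _ h
    dsimp only at h
    exact Fin.ext (by exact_mod_cast h)
  · rw [Int.card_Icc]
    omega

lemma trig_bddBelow (n : ℕ) (p : ℕ → ℝ) : BddBelow (Set.range (trigPoly n p)) := by
  refine ⟨p 0 - ∑ k ∈ Finset.Icc 1 n, |2 * p k|, ?_⟩
  rintro _ ⟨θ, rfl⟩
  rw [trigPoly]
  have h : ∀ k ∈ Finset.Icc 1 n, -|2 * p k| ≤ 2 * p k * Real.cos (k * θ) := by
    intro k _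
    have h1 : |2 * p k * Real.cos ((k:ℝ) * θ)| ≤ |2 * p k| := by
      rw [abs_mul]
      nlinarith [abs_nonneg (2 * p k), Real.abs_cos_le_one ((k:ℝ)*θ),
        abs_nonneg (Real.cos ((k:ℝ)*θ))]
    nlinarith [neg_abs_le (2 * p k * Real.cos ((k:ℝ)*θ))]
  have h2 := Finset.sum_le_sum h
  rw [Finset.sum_neg_distrib] at h2
  linarith

/-- `λ_min(P_m) → min_θ p(θ)` as `m → ∞`. -/
theorem stmt4 (n : ℕ) (p : ℕ → ℝ)
    (hA : ∀ m : ℕ, (Pmat n m p).IsHermitian) :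
    Tendsto (fun m : ℕ => ⨅ i : Fin m, (hA m).eigenvalues i) atTop
      (𝓝 (⨅ θ : ℝ, trigPoly n p θ)) := by
  classical
  have hbdd := trig_bddBelow n p
  set c := ⨅ θ : ℝ, trigPoly n p θ with hc
  set S := ∑ d ∈ Finset.range (n+1), |p d| with hS
  have hSnn : 0 ≤ S := Finset.sum_nonneg fun d _ => abs_nonneg _
  set K := (2*(n:ℝ)+1) * ((n:ℝ) * S) with hK
  -- upper bound
  have upper : ∀ m : ℕ, n < m → (⨅ i : Fin m, (hA m).eigenvalues i) ≤ c := by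
    intro m hm
    have hm1 : 0 < m := by omega
    refine le_ciInf fun θ => ?_
    set u : Fin m → ℝ := fun j => Real.cos (j * θ) with hu
    set v : Fin m → ℝ := fun j => Real.sin (j * θ) with hv
    have h1 := quad_lower _ (hA m) hm1 u
    have h2 := quad_lower _ (hA m) hm1 v
    have hsum : (∑ j : Fin m, u j ^ 2) + (∑ j : Fin m, v j ^ 2) = m := by
      rw [← Finset.sum_add_distrib]
      have : ∀ j : Fin m, u j ^ 2 + v j ^ 2 = 1 := by
        intro j
        simp only [hu, hv]
        exact Real.cos_sq_add_sin_sq _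
      rw [Finset.sum_congr rfl fun j _ => this j]
      simp
    have hquad : u ⬝ᵥ (Pmat n m p) *ᵥ u + v ⬝ᵥ (Pmat n m p) *ᵥ v = m * trigPoly n p θ := by
      rw [dot_eq, dot_eq, ← Finset.sum_add_distrib]
      have hterm : ∀ j : Fin m,
          ((∑ k : Fin m, Pmat n m p j k * u j * u k) + ∑ k : Fin m, Pmat n m p j k * v j * v k)
          = ∑ k : Fin m, (if ((j:ℤ)-(k:ℤ)).natAbs ≤ n then
              ((m:ℝ)/((m:ℝ) - ((((j:ℤ)-(k:ℤ)).natAbs:ℕ):ℝ))) * p (((j:ℤ)-(k:ℤ)).natAbs)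
                * Real.cos (((((j:ℤ)-(k:ℤ)):ℤ):ℝ) * θ) else 0) := by
        intro j
        rw [← Finset.sum_add_distrib]
        refine Finset.sum_congr rfl fun k _ => ?_
        have hcs : u j * u k + v j * v k = Real.cos (((((j:ℤ)-(k:ℤ)):ℤ):ℝ) * θ) := by
          simp only [hu, hv]
          push_cast
          rw [show ((j:ℝ) - k) * θ = (j:ℝ)*θ - (k:ℝ)*θ by ring, Real.cos_sub]
        rw [Pmat]
        by_cases hcond : ((j:ℤ)-(k:ℤ)).natAbs ≤ n
        · rw [if_pos hcond, if_pos hcond]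
          linear_combination
            (((m:ℝ)/((m:ℝ) - ((((j:ℤ)-(k:ℤ)).natAbs:ℕ):ℝ))) * p (((j:ℤ)-(k:ℤ)).natAbs)) * hcs
        · rw [if_neg hcond, if_neg hcond]
          ring
      rw [Finset.sum_congr rfl fun j _ => hterm j]
      rw [sum_band n m hm (fun d => ((m:ℝ)/((m:ℝ) - ((d.natAbs:ℕ):ℝ))) * p d.natAbs
        * Real.cos ((d:ℝ) * θ))]
      have hw : ∀ d ∈ Finset.Icc (-(n:ℤ)) (n:ℤ),
          ((m - d.natAbs : ℕ):ℝ) * (((m:ℝ)/((m:ℝ) - ((d.natAbs:ℕ):ℝ))) * p d.natAbs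
            * Real.cos ((d:ℝ)*θ))
          = (m:ℝ) * (p d.natAbs * Real.cos ((d:ℝ)*θ)) := by
        intro d hd
        rw [Finset.mem_Icc] at hd
        have h1 : d.natAbs ≤ n := by omega
        have h2 : (d.natAbs:ℝ) < (m:ℝ) := by exact_mod_cast (by omega : d.natAbs < m)
        have hne : (m:ℝ) - (d.natAbs:ℝ) ≠ 0 := by linarith
        rw [Nat.cast_sub (by omega : d.natAbs ≤ m)]
        field_simp
      rw [Finset.sum_congr rfl hw, ← Finset.mul_sum]
      congr 1
      exact tp_real p θ n
    have hm0 : (0:ℝ) < m := by exact_mod_cast hm1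
    have hfin : (⨅ i : Fin m, (hA m).eigenvalues i) * (m:ℝ) ≤ (m:ℝ) * trigPoly n p θ := by
      calc (⨅ i : Fin m, (hA m).eigenvalues i) * (m:ℝ)
          = (⨅ i : Fin m, (hA m).eigenvalues i) * ((∑ j : Fin m, u j ^ 2)
            + ∑ j : Fin m, v j ^ 2) := by rw [hsum]
        _ ≤ u ⬝ᵥ (Pmat n m p) *ᵥ u + v ⬝ᵥ (Pmat n m p) *ᵥ v := by
            rw [mul_add]; exact add_le_add h1 h2
        _ = (m:ℝ) * trigPoly n p θ := hquad
    have := (mul_le_mul_iff_right₀ hm0).mp (by linarith : (m:ℝ) * (⨅ i : Fin m, (hA m).eigenvalues i)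
      ≤ (m:ℝ) * trigPoly n p θ)
    exact this
  -- lower bound
  have lower : ∀ m : ℕ, n < m →
      c - K / ((m:ℝ) - n) ≤ (⨅ i : Fin m, (hA m).eigenvalues i) := by
    intro m hm
    have hm1 : 0 < m := by omega
    haveI : Nonempty (Fin m) := ⟨⟨0, hm1⟩⟩
    have hmn : (0:ℝ) < (m:ℝ) - n := by
      have : (n:ℝ) < m := by exact_mod_cast hm
      linarith
    refine le_ciInf fun i => ?_
    obtain ⟨v, hv1, hv2⟩ := eig_attained _ (hA m) i
    rw [← hv2, dot_eq]
    set rr : Fin m → Fin m → ℝ := fun a b =>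
      if ((a:ℤ)-(b:ℤ)).natAbs ≤ n then p (((a:ℤ)-(b:ℤ)).natAbs) else 0 with hrr
    have hR := R_quad_lower n m hm1 p v hbdd
    rw [hv1, mul_one] at hR
    set β := (n:ℝ) * S / ((m:ℝ) - (n:ℝ)) with hβ
    have hβnn : 0 ≤ β := by
      apply div_nonneg _ (le_of_lt hmn)
      positivity
    have hentry : ∀ j k : Fin m, |Pmat n m p j k - rr j k|
        ≤ (if ((j:ℤ)-(k:ℤ)).natAbs ≤ n then β else 0) := by
      intro j k
      simp only [Pmat, hrr]
      by_cases hcond : ((j:ℤ)-(k:ℤ)).natAbs ≤ n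
      · rw [if_pos hcond, if_pos hcond, if_pos hcond]
        set d := ((j:ℤ)-(k:ℤ)).natAbs with hd
        have hdm : (d:ℝ) < (m:ℝ) := by exact_mod_cast (by omega : d < m)
        have hne : (0:ℝ) < (m:ℝ) - (d:ℝ) := by linarith
        have heq : (m:ℝ)/((m:ℝ)-(d:ℝ)) * p d - p d = p d * ((d:ℝ)/((m:ℝ)-(d:ℝ))) := by
          field_simp
          ring
        rw [heq, abs_mul]
        have h1 : |p d| ≤ S := by
          rw [hS]
          exact Finset.single_le_sum (fun e _ => abs_nonneg (p e))
            (Finset.mem_range.mpr (by omega))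
        have h2 : |(d:ℝ)/((m:ℝ)-(d:ℝ))| = (d:ℝ)/((m:ℝ)-(d:ℝ)) :=
          abs_of_nonneg (div_nonneg (Nat.cast_nonneg d) (le_of_lt hne))
        have h3 : (d:ℝ)/((m:ℝ)-(d:ℝ)) ≤ (n:ℝ)/((m:ℝ)-(n:ℝ)) := by
          rw [div_le_div_iff₀ hne hmn]
          have hdn : (d:ℝ) ≤ (n:ℝ) := by exact_mod_cast hcond
          nlinarith [(Nat.cast_nonneg m : (0:ℝ) ≤ (m:ℕ))]
        rw [h2]
        calc |p d| * ((d:ℝ)/((m:ℝ)-(d:ℝ))) ≤ S * ((n:ℝ)/((m:ℝ)-(n:ℝ))) := by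
              apply mul_le_mul h1 h3 (div_nonneg (Nat.cast_nonneg d) (le_of_lt hne)) hSnn
          _ = β := by rw [hβ]; ring
      · rw [if_neg hcond, if_neg hcond, if_neg hcond]
        simp
    have hEbound : |(∑ j : Fin m, ∑ k : Fin m, Pmat n m p j k * v j * v k)
        - ∑ j : Fin m, ∑ k : Fin m, rr j k * v j * v k| ≤ (2*(n:ℝ)+1) * β := by
      rw [← Finset.sum_sub_distrib]
      simp_rw [← Finset.sum_sub_distrib]
      set W : Fin m → Fin m → ℝ := fun j k =>
        (if ((j:ℤ)-(k:ℤ)).natAbs ≤ n then β else 0) with hW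
      have hWnn : ∀ j k, 0 ≤ W j k := by
        intro j k; rw [hW]; dsimp only; split
        · exact hβnn
        · exact le_refl 0
      have step1 : |∑ j : Fin m, ∑ k : Fin m, (Pmat n m p j k * v j * v k
          - rr j k * v j * v k)| ≤ ∑ j : Fin m, ∑ k : Fin m, W j k * ((v j^2 + v k^2)/2) := by
        refine (Finset.abs_sum_le_sum_abs _ _).trans ?_
        refine Finset.sum_le_sum fun j _ => ?_
        refine (Finset.abs_sum_le_sum_abs _ _).trans ?_
        refine Finset.sum_le_sum fun k _ => ?_
        have h1 : Pmat n m p j k * v j * v k - rr j k * v j * v k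
            = (Pmat n m p j k - rr j k) * v j * v k := by ring
        rw [h1, abs_mul, abs_mul]
        have h2 : |v j| * |v k| ≤ (v j^2 + v k^2)/2 := by
          nlinarith [sq_nonneg (|v j| - |v k|), sq_abs (v j), sq_abs (v k),
            abs_nonneg (v j), abs_nonneg (v k)]
        calc |Pmat n m p j k - rr j k| * |v j| * |v k|
            ≤ W j k * (|v j| * |v k|) := by
              rw [mul_assoc]
              exact mul_le_mul_of_nonneg_right (hentry j k)
                (mul_nonneg (abs_nonneg _) (abs_nonneg _))
          _ ≤ W j k * ((v j^2 + v k^2)/2) :=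
              mul_le_mul_of_nonneg_left h2 (hWnn j k)
      refine step1.trans ?_
      have hsym : ∑ j : Fin m, ∑ k : Fin m, W j k * v k ^ 2
          = ∑ j : Fin m, ∑ k : Fin m, W j k * v j ^ 2 := by
        rw [Finset.sum_comm]
        refine Finset.sum_congr rfl fun j _ => Finset.sum_congr rfl fun k _ => ?_
        have : W k j = W j k := by
          rw [hW]
          dsimp only
          rw [show ((k:ℤ)-(j:ℤ)).natAbs = ((j:ℤ)-(k:ℤ)).natAbs by omega]
        rw [this]
      have split : ∑ j : Fin m, ∑ k : Fin m, W j k * ((v j^2 + v k^2)/2)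
          = ∑ j : Fin m, ∑ k : Fin m, W j k * v j ^ 2 := by
        have e1 : ∀ j k : Fin m, W j k * ((v j^2 + v k^2)/2)
            = (W j k * v j^2)/2 + (W j k * v k^2)/2 := fun j k => by ring
        simp_rw [e1, Finset.sum_add_distrib, ← Finset.sum_div]
        rw [hsym]
        ring
      rw [split]
      have hrow : ∀ j : Fin m, ∑ k : Fin m, W j k ≤ (2*(n:ℝ)+1) * β := by
        intro j
        rw [hW]
        rw [← Finset.sum_filter, Finset.sum_const, nsmul_eq_mul]
        apply mul_le_mul_of_nonneg_right _ hβnn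
        exact_mod_cast band_card n m j
      calc ∑ j : Fin m, ∑ k : Fin m, W j k * v j ^ 2
          = ∑ j : Fin m, v j ^ 2 * ∑ k : Fin m, W j k := by
            refine Finset.sum_congr rfl fun j _ => ?_
            rw [Finset.mul_sum]
            exact Finset.sum_congr rfl fun k _ => by ring
        _ ≤ ∑ j : Fin m, v j ^ 2 * ((2*(n:ℝ)+1) * β) := by
            refine Finset.sum_le_sum fun j _ => ?_
            exact mul_le_mul_of_nonneg_left (hrow j) (sq_nonneg _)
        _ = (2*(n:ℝ)+1) * β := by
            rw [← Finset.sum_mul, hv1, one_mul]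
    have hKβ : (2*(n:ℝ)+1) * β = K / ((m:ℝ) - n) := by
      rw [hβ, hK]
      ring
    have h4 := (abs_le.mp hEbound).1
    rw [hKβ] at h4
    linarith
  -- squeeze
  have h1 : Tendsto (fun m : ℕ => c - K / ((m:ℝ) - n)) atTop (𝓝 c) := by
    have ht : Tendsto (fun m : ℕ => ((m:ℝ) - n)) atTop atTop :=
      tendsto_atTop_add_const_right _ _ tendsto_natCast_atTop_atTop
    have h2 := ht.inv_tendsto_atTop
    have h3 : Tendsto (fun m : ℕ => K / ((m:ℝ)-n)) atTop (𝓝 0) := by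
      have := h2.const_mul K
      simpa [div_eq_mul_inv] using this
    have := (tendsto_const_nhds : Tendsto (fun _ : ℕ => c) atTop (𝓝 c)).sub h3
    simpa using this
  refine tendsto_of_tendsto_of_tendsto_of_le_of_le' h1 tendsto_const_nhds ?_ ?_
  · filter_upwards [eventually_gt_atTop n] with m hm using lower m hm
  · filter_upwards [eventually_gt_atTop n] with m hm using upper m hm
end

section
/- The trigonometric polynomial p(θ) = 2 + 2cos θ + (8/5)cos 2θ is strictly positive for all real θ, yet the associated 3×3 weighted Toeplitz matrix P₃ = [[2, 3/2, 12/5], [3/2, 2, 3/2], [12/5, 3/2, 2]] is not positive definite: its minimum eigenvalue equals -2/5. -/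
open Matrix Real

private lemma key (l : ℝ) (h : l ∈ spectrum ℝ (!![(2 : ℝ), 3/2, 12/5; 3/2, 2, 3/2; 12/5, 3/2, 2])) :
    (l + 2/5) * (l^2 - 32/5*l + 43/10) = 0 := by
  rw [spectrum.mem_iff, Matrix.isUnit_iff_isUnit_det, isUnit_iff_ne_zero, not_not,
    Matrix.det_fin_three] at h
  simp [Matrix.algebraMap_matrix_apply] at h
  nlinarith [h]

/-- `p(θ) = 2 + 2cos θ + (8/5)cos 2θ` is strictly positive, yet the associated
weighted Toeplitz matrix `P₃` is not positive definite: `λ_min(P₃) = -2/5`. -/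
theorem stmt6 :
    (∀ θ : ℝ, 0 < 2 + 2 * Real.cos θ + (8/5) * Real.cos (2 * θ)) ∧
    ¬ (!![(2 : ℝ), 3/2, 12/5; 3/2, 2, 3/2; 12/5, 3/2, 2]).PosDef ∧
    (∀ hA : (!![(2 : ℝ), 3/2, 12/5; 3/2, 2, 3/2; 12/5, 3/2, 2]).IsHermitian,
      (⨅ i : Fin 3, hA.eigenvalues i) = -2/5) := by
  refine ⟨?_, ?_, ?_⟩
  · intro θ
    rw [Real.cos_two_mul]
    nlinarith [sq_nonneg (Real.cos θ + 5/16)]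
  · intro h
    have := h.dotProduct_mulVec_pos (x := ![(1:ℝ), 0, -1]) (by intro hx; have := congrFun hx 0; simp at this)
    simp [Matrix.mulVec, dotProduct, Fin.sum_univ_three] at this
    norm_num at this
  · intro hA
    have hge : ∀ i, -2/5 ≤ hA.eigenvalues i := by
      intro i
      have hk := key _ (hA.eigenvalues_mem_spectrum_real i)
      by_contra hlt
      push_neg at hlt
      set l := hA.eigenvalues i
      have h1 : l + 2/5 ≠ 0 := by linarith
      have h2 : l^2 - 32/5*l + 43/10 = 0 := by
        rcases mul_eq_zero.mp hk with h | h
        · exact absurd h h1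
        · exact h
      nlinarith
    have hex : ∃ i, hA.eigenvalues i = -2/5 := by
      by_contra hne
      push_neg at hne
      have hpos : ∀ i, 0 < hA.eigenvalues i := by
        intro i
        have hk := key _ (hA.eigenvalues_mem_spectrum_real i)
        have h1 : hA.eigenvalues i + 2/5 ≠ 0 := fun h => hne i (by linarith)
        have h2 : (hA.eigenvalues i)^2 - 32/5*(hA.eigenvalues i) + 43/10 = 0 := by
          rcases mul_eq_zero.mp hk with h | h
          · exact absurd h h1
          · exact h
        nlinarith
      have hdet : (!![(2 : ℝ), 3/2, 12/5; 3/2, 2, 3/2; 12/5, 3/2, 2]).det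
          = ∏ i, hA.eigenvalues i := hA.det_eq_prod_eigenvalues
      rw [Matrix.det_fin_three] at hdet
      simp at hdet; norm_num at hdet
      have : (0:ℝ) < ∏ i, hA.eigenvalues i := Finset.prod_pos fun i _ => hpos i
      rw [← hdet] at this
      norm_num at this
    obtain ⟨i₀, hi₀⟩ := hex
    refine le_antisymm ?_ (le_ciInf hge)
    calc (⨅ i, hA.eigenvalues i) ≤ hA.eigenvalues i₀ :=
          ciInf_le (Set.Finite.bddBelow (Set.finite_range _)) i₀
      _ = -2/5 := hi₀
end

section
/- Let c(z) and d(z) be monic real polynomials of degree n with c Schur stable (all roots in the open unit disk). If the trigonometric polynomial p^{c,d}(θ) = c(e^{-iθ})d(e^{iθ}) + c(e^{iθ})d(e^{-iθ}) is strictly positive for all θ, then d is Schur stable. -/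
open Polynomial Complex

open Metric Set in
lemma reflect_aeval (p : Polynomial ℝ) (n : ℕ) (hp : p.natDegree ≤ n) (w : ℂ) (hw : w ≠ 0) :
    (Polynomial.aeval w (Polynomial.reflect n p)) * w⁻¹ ^ n = Polynomial.aeval w⁻¹ p := by
  letI : Invertible (w⁻¹) := invertibleOfNonzero (inv_ne_zero hw)
  have h := Polynomial.eval₂_reflect_mul_pow (algebraMap ℝ ℂ) w⁻¹ n p hp
  rw [invOf_eq_inv, inv_inv] at h
  simpa [Polynomial.aeval_def] using h

lemma re_div_pos {a b : ℂ} (hb : b ≠ 0) (h : 0 < ((starRingEnd ℂ) b * a).re) :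
    0 < (a / b).re := by
  rw [div_eq_mul_inv, Complex.inv_def]
  have he : a * ((starRingEnd ℂ) b * ((Complex.normSq b)⁻¹ : ℝ)) =
      (((Complex.normSq b)⁻¹ : ℝ) : ℂ) * ((starRingEnd ℂ) b * a) := by ring
  rw [he, Complex.re_ofReal_mul]
  exact mul_pos (inv_pos.mpr (Complex.normSq_pos.mpr hb)) h

open Metric Set in
/-- If `c` is a Schur stable monic real polynomial of degree `n`, `d` is monic of degree `n`,
and `p^{c,d}(θ) = c(e^{-iθ})d(e^{iθ}) + c(e^{iθ})d(e^{-iθ}) > 0` for all `θ`,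
then `d` is Schur stable. -/
theorem stmt8 (n : ℕ) (c d : Polynomial ℝ)
    (hcm : c.Monic) (hcd : c.natDegree = n)
    (hdm : d.Monic) (hdd : d.natDegree = n)
    (hcstab : ∀ z : ℂ, Polynomial.aeval z c = 0 → ‖z‖ < 1)
    (hpos : ∀ θ : ℝ,
      0 < ((Polynomial.aeval (Complex.exp (-(θ : ℂ) * Complex.I)) c) *
             (Polynomial.aeval (Complex.exp ((θ : ℂ) * Complex.I)) d) +
           (Polynomial.aeval (Complex.exp ((θ : ℂ) * Complex.I)) c) *
             (Polynomial.aeval (Complex.exp (-(θ : ℂ) * Complex.I)) d)).re) :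
    ∀ z : ℂ, Polynomial.aeval z d = 0 → ‖z‖ < 1 := by
  set C : ℂ → ℂ := fun w => Polynomial.aeval w (Polynomial.reflect n c) with hCdef
  set D : ℂ → ℂ := fun w => Polynomial.aeval w (Polynomial.reflect n d) with hDdef
  -- C is nonvanishing on the closed unit disk
  have hCne : ∀ w : ℂ, ‖w‖ ≤ 1 → C w ≠ 0 := by
    intro w hw hzero
    by_cases hw0 : w = 0
    · have hC0 : C 0 = 1 := by
        simp only [hCdef, Polynomial.aeval_def, Polynomial.eval₂_at_zero,
          Polynomial.coeff_reflect, Polynomial.revAt_le (Nat.zero_le n), Nat.sub_zero]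
        rw [← hcd, hcm.coeff_natDegree, map_one]
      rw [hw0, hC0] at hzero
      exact one_ne_zero hzero
    · have h := reflect_aeval c n hcd.le w hw0
      have hzero' : Polynomial.aeval w (Polynomial.reflect n c) = 0 := hzero
      rw [hzero', zero_mul] at h
      have h1 := hcstab w⁻¹ h.symm
      rw [norm_inv] at h1
      have hpos' : 0 < ‖w‖ := norm_pos_iff.mpr hw0
      have := mul_lt_mul_of_pos_left h1 hpos'
      rw [mul_inv_cancel₀ hpos'.ne', mul_one] at this
      linarith
  -- positivity of the real part of D/C on the unit circle
  have hsph : ∀ w ∈ sphere (0 : ℂ) 1, 0 < (D w / C w).re := by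
    intro w hwmem
    have habs : ‖w‖ = 1 := by
      simpa [Complex.dist_eq] using hwmem
    have hw0 : w ≠ 0 := by
      intro h; rw [h] at habs; simp at habs
    set θ := Complex.arg w with hθ
    have hwexp : Complex.exp ((θ : ℂ) * Complex.I) = w := by
      have h := Complex.norm_mul_exp_arg_mul_I w
      rw [habs] at h; simpa using h
    have hwinv : w⁻¹ = Complex.exp (-(θ : ℂ) * Complex.I) := by
      rw [← hwexp, ← Complex.exp_neg]; ring_nf
    have hconj : (starRingEnd ℂ) (Complex.exp (-(θ : ℂ) * Complex.I)) =
        Complex.exp ((θ : ℂ) * Complex.I) := by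
      rw [← Complex.exp_conj]
      congr 1
      simp [Complex.conj_I]
    have hconj' : (starRingEnd ℂ) (Complex.exp ((θ : ℂ) * Complex.I)) =
        Complex.exp (-(θ : ℂ) * Complex.I) := by
      rw [← Complex.exp_conj]
      congr 1
      simp [Complex.conj_I]
    -- from hpos: the two summands are conjugate
    have hA : 0 < ((Polynomial.aeval (Complex.exp ((θ : ℂ) * Complex.I)) c) *
        (Polynomial.aeval (Complex.exp (-(θ : ℂ) * Complex.I)) d)).re := by
      have h := hpos θ
      have hcc : Polynomial.aeval (Complex.exp (-(θ : ℂ) * Complex.I)) c *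
            Polynomial.aeval (Complex.exp ((θ : ℂ) * Complex.I)) d =
          (starRingEnd ℂ) (Polynomial.aeval (Complex.exp ((θ : ℂ) * Complex.I)) c *
            Polynomial.aeval (Complex.exp (-(θ : ℂ) * Complex.I)) d) := by
        rw [map_mul, ← Polynomial.aeval_conj, ← Polynomial.aeval_conj, hconj, hconj']
      rw [hcc, Complex.add_re, Complex.conj_re] at h
      linarith
    -- rewrite D w / C w as aeval w⁻¹ d / aeval w⁻¹ c
    have hinv0 : (w⁻¹ : ℂ) ≠ 0 := inv_ne_zero hw0
    have hDeq := reflect_aeval d n hdd.le w hw0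
    have hCeq := reflect_aeval c n hcd.le w hw0
    have hbne : Polynomial.aeval w⁻¹ c ≠ 0 := by
      intro h
      have := hcstab w⁻¹ h
      rw [norm_inv, habs] at this
      simp at this
    have hgw : D w / C w = Polynomial.aeval w⁻¹ d / Polynomial.aeval w⁻¹ c := by
      rw [← hDeq, ← hCeq, mul_div_mul_right _ _ (pow_ne_zero n hinv0)]
    rw [hgw]
    apply re_div_pos hbne
    rw [← Polynomial.aeval_conj]
    have : (starRingEnd ℂ) (w⁻¹ : ℂ) = Complex.exp ((θ : ℂ) * Complex.I) := by
      rw [hwinv, hconj]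
    rw [this, hwinv]
    exact hA
  -- minimum of (D/C).re on the sphere
  have hcont : ContinuousOn (fun w => (D w / C w).re) (sphere (0 : ℂ) 1) := by
    apply Continuous.comp_continuousOn Complex.continuous_re
    exact ((Polynomial.reflect n d).continuous_aeval).continuousOn.div
      ((Polynomial.reflect n c).continuous_aeval).continuousOn
      (fun w hw => hCne w (le_of_eq (by simpa [Complex.dist_eq] using hw)))
  obtain ⟨w₀, hw₀mem, hmin⟩ := (isCompact_sphere (0 : ℂ) 1).exists_isMinOn
    ⟨1, by simp⟩ hcont
  set m : ℝ := (D w₀ / C w₀).re with hmdef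
  have hm : 0 < m := hsph w₀ hw₀mem
  -- maximum modulus principle for exp(-(D/C))
  have hdiffcl : DiffContOnCl ℂ (fun w => Complex.exp (-(D w / C w))) (ball (0 : ℂ) 1) := by
    apply DifferentiableOn.diffContOnCl
    rw [closure_ball (0 : ℂ) one_ne_zero]
    apply DifferentiableOn.cexp
    apply DifferentiableOn.neg
    exact ((Polynomial.reflect n d).differentiable_aeval).differentiableOn.div
      ((Polynomial.reflect n c).differentiable_aeval).differentiableOn
      (fun w hw => hCne w (by simpa [Complex.dist_eq] using hw))
  have hkey : ∀ w ∈ closedBall (0 : ℂ) 1,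
      ‖Complex.exp (-(D w / C w))‖ ≤ Real.exp (-m) := by
    intro w hw
    apply Complex.norm_le_of_forall_mem_frontier_norm_le isBounded_ball hdiffcl
    · intro ζ hζ
      rw [frontier_ball (0 : ℂ) one_ne_zero] at hζ
      rw [Complex.norm_exp, Complex.neg_re]
      exact Real.exp_le_exp.mpr (neg_le_neg (hmin hζ))
    · rwa [closure_ball (0 : ℂ) one_ne_zero]
  -- conclusion
  intro z hz
  by_contra hlt
  push_neg at hlt
  have hz0 : z ≠ 0 := by
    intro h
    rw [h] at hlt
    simp only [norm_zero] at hlt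
    linarith
  set w : ℂ := z⁻¹ with hwdef
  have hw0 : w ≠ 0 := inv_ne_zero hz0
  have hwle : ‖w‖ ≤ 1 := by
    rw [hwdef, norm_inv]
    exact inv_le_one_of_one_le₀ hlt
  have hDw : D w = 0 := by
    have h : D w * w⁻¹ ^ n = Polynomial.aeval w⁻¹ d := reflect_aeval d n hdd.le w hw0
    rw [hwdef, inv_inv, hz, mul_eq_zero] at h
    rcases h with h | h
    · exact h
    · exact absurd h (pow_ne_zero n hz0)
  have h1 := hkey w (by simpa [Complex.dist_eq] using hwle)
  rw [hDw, zero_div, neg_zero, Complex.exp_zero, norm_one] at h1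
  have h2 : Real.exp (-m) < 1 := Real.exp_lt_one_iff.mpr (by linarith)
  linarith
end

section
/- Let d(z) = d₀ + d₁z + z² be a monic real quadratic. If the 3×3 matrix [[2, (3/2)d₁, 3d₀], [(3/2)d₁, 2, (3/2)d₁], [3d₀, (3/2)d₁, 2]] is positive definite, then d is Schur stable, i.e., both roots of d lie in the open unit disk. -/
open Matrix Complex

/-- If the 3×3 LMI matrix (central polynomial `c(z) = z²`) is positive definite, then
`d(z) = d₀ + d₁z + z²` is Schur stable. -/
theorem stmt13 (d₀ d₁ : ℝ)
    (hPD : (!![(2 : ℝ), (3/2) * d₁, 3 * d₀;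
               (3/2) * d₁, 2, (3/2) * d₁;
               3 * d₀, (3/2) * d₁, 2]).PosDef) :
    ∀ z : ℂ, z ^ 2 + (d₁ : ℂ) * z + (d₀ : ℂ) = 0 → ‖z‖ < 1 := by
  -- extract inequalities
  have key : ∀ x : Fin 3 → ℝ, x ≠ 0 →
      0 < x ⬝ᵥ ((!![(2 : ℝ), (3/2) * d₁, 3 * d₀;
               (3/2) * d₁, 2, (3/2) * d₁;
               3 * d₀, (3/2) * d₁, 2]) *ᵥ x) := by
    intro x hx
    have := hPD.dotProduct_mulVec_pos hx
    simpa using this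
  have h1 : 0 < 4 - 6 * d₀ := by
    have := key ![1, 0, -1] (by intro h; have := congrFun h 0; simp at this)
    simp [Matrix.mulVec, dotProduct, Fin.sum_univ_three] at this
    linarith
  have h2 : 0 < 4 + 6 * d₀ := by
    have := key ![1, 0, 1] (by intro h; have := congrFun h 0; simp at this)
    simp [Matrix.mulVec, dotProduct, Fin.sum_univ_three] at this
    linarith
  have h3 : 0 < 6 - 6 * d₁ + 6 * d₀ := by
    have := key ![1, -1, 1] (by intro h; have := congrFun h 0; simp at this)
    simp [Matrix.mulVec, dotProduct, Fin.sum_univ_three] at this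
    linarith
  have h4 : 0 < 6 + 6 * d₁ + 6 * d₀ := by
    have := key ![1, 1, 1] (by intro h; have := congrFun h 0; simp at this)
    simp [Matrix.mulVec, dotProduct, Fin.sum_univ_three] at this
    linarith
  have hd0 : d₀ < 1 := by linarith
  have hd0' : -1 < d₀ := by linarith
  have hd1 : d₁ < 1 + d₀ := by linarith
  have hd1' : -(1 + d₀) < d₁ := by linarith
  intro z hz
  by_cases him : z.im = 0
  · -- real root
    have hz' : z = (z.re : ℂ) := by
      apply Complex.ext <;> simp [him]
    set r := z.re with hr
    have heqR : r ^ 2 + d₁ * r + d₀ = 0 := by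
      have h := hz
      rw [hz'] at h
      exact_mod_cast congrArg Complex.re (by push_cast at h ⊢; exact h : ((r ^ 2 + d₁ * r + d₀ : ℝ) : ℂ) = 0)
    rw [hz']
    rw [Complex.norm_real, Real.norm_eq_abs]
    rw [abs_lt]
    constructor
    · nlinarith [sq_nonneg (r + 1), sq_nonneg (r - 1)]
    · nlinarith [sq_nonneg (r + 1), sq_nonneg (r - 1)]
  · -- nonreal root: conjugate also root
    have hconj : (starRingEnd ℂ) z ^ 2 + (d₁ : ℂ) * (starRingEnd ℂ) z + (d₀ : ℂ) = 0 := by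
      have := congrArg (starRingEnd ℂ) hz
      simpa [map_add, _root_.map_mul, map_pow, Complex.conj_ofReal] using this
    have hne : z - (starRingEnd ℂ) z ≠ 0 := by
      intro h
      apply him
      have : z = (starRingEnd ℂ) z := by linear_combination h
      have := Complex.conj_eq_iff_im.mp this.symm
      exact this
    have hsum : z + (starRingEnd ℂ) z = -(d₁ : ℂ) := by
      have hfac : (z - (starRingEnd ℂ) z) * (z + (starRingEnd ℂ) z + (d₁ : ℂ)) = 0 := by
        linear_combination hz - hconj
      rcases mul_eq_zero.mp hfac with h | h
      · exact absurd h hne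
      · linear_combination h
    have hprod : z * (starRingEnd ℂ) z = (d₀ : ℂ) := by
      linear_combination z * hsum - hz
    have hnormSq : (Complex.normSq z : ℝ) = d₀ := by
      have : ((Complex.normSq z : ℂ)) = (d₀ : ℂ) := by
        rw [← Complex.mul_conj]; exact hprod
      exact_mod_cast this
    have : ‖z‖ ^ 2 < 1 := by
      rw [Complex.sq_norm, hnormSq]; exact hd0
    nlinarith [norm_nonneg z]
end

section
/- Let d(z) = d₀ + d₁z + z² be monic real quadratic. If the 4×4 matrix [[2, (4/3)d₁, 2d₀, 0], [(4/3)d₁, 2, (4/3)d₁, 2d₀], [2d₀, (4/3)d₁, 2, (4/3)d₁], [0, 2d₀, (4/3)d₁, 2]] is positive definite, then |d₀| < 1 and |d₁| < 1 + d₀ (equivalently, d is Schur stable). -/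
open Matrix

/-- If the 4×4 LMI matrix (central polynomial `c(z) = z²`) is positive definite, then
`|d₀| < 1` and `|d₁| < 1 + d₀`, i.e. `z² + d₁z + d₀` is Schur stable. -/
theorem stmt14 (d₀ d₁ : ℝ)
    (hPD : (!![(2 : ℝ), (4/3) * d₁, 2 * d₀, 0;
               (4/3) * d₁, 2, (4/3) * d₁, 2 * d₀;
               2 * d₀, (4/3) * d₁, 2, (4/3) * d₁;
               0, 2 * d₀, (4/3) * d₁, 2]).PosDef) :
    |d₀| < 1 ∧ |d₁| < 1 + d₀ := by
  have h1 := hPD.dotProduct_mulVec_pos (x := ![1,0,-1,0]) (by intro h; have := congrFun h 0; simp at this)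
  have h2 := hPD.dotProduct_mulVec_pos (x := ![1,0,1,0]) (by intro h; have := congrFun h 0; simp at this)
  have h3 := hPD.dotProduct_mulVec_pos (x := ![1,-1,1,-1]) (by intro h; have := congrFun h 0; simp at this)
  have h4 := hPD.dotProduct_mulVec_pos (x := ![1,1,1,1]) (by intro h; have := congrFun h 0; simp at this)
  simp [Matrix.mulVec, dotProduct, Fin.sum_univ_four] at h1 h2 h3 h4
  constructor
  · rw [abs_lt]; constructor <;> nlinarith
  · rw [abs_lt]; constructor <;> nlinarith
end

section
/- Let d(z) = d₀ + d₁z + d₂z² + z³ be a monic real cubic. If the 4×4 matrix [[2, (4/3)d₂, 2d₁, 4d₀], [(4/3)d₂, 2, (4/3)d₂, 2d₁], [2d₁, (4/3)d₂, 2, (4/3)d₂], [4d₀, 2d₁, (4/3)d₂, 2]] is positive definite, then all three roots of d lie in the open unit disk. -/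
open Matrix Complex

private lemma key17 (d₀ d₁ d₂ c s : ℝ) (hcs : c^2 + s^2 = 1)
    (hPD : (!![(2 : ℝ), (4/3) * d₂, 2 * d₁, 4 * d₀;
               (4/3) * d₂, 2, (4/3) * d₂, 2 * d₁;
               2 * d₁, (4/3) * d₂, 2, (4/3) * d₂;
               4 * d₀, 2 * d₁, (4/3) * d₂, 2]).PosDef) :
    0 < 1 + d₂ * c + d₁ * (2*c^2 - 1) + d₀ * (4*c^3 - 3*c) := by
  set M := (!![(2 : ℝ), (4/3) * d₂, 2 * d₁, 4 * d₀;
               (4/3) * d₂, 2, (4/3) * d₂, 2 * d₁;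
               2 * d₁, (4/3) * d₂, 2, (4/3) * d₂;
               4 * d₀, 2 * d₁, (4/3) * d₂, 2]) with hM
  set x : Fin 4 → ℝ := ![1, c, 2*c^2 - 1, 4*c^3 - 3*c] with hxdef
  set y : Fin 4 → ℝ := ![0, s, 2*s*c, s*(4*c^2 - 1)] with hydef
  have hxne : x ≠ 0 := by
    intro h
    have := congrFun h 0
    simp [hxdef] at this
  have hx : 0 < x ⬝ᵥ (M *ᵥ x) := by simpa using hPD.dotProduct_mulVec_pos hxne
  have hy : 0 ≤ y ⬝ᵥ (M *ᵥ y) := by simpa using hPD.posSemidef.dotProduct_mulVec_nonneg y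
  have E : x ⬝ᵥ (M *ᵥ x) + y ⬝ᵥ (M *ᵥ y)
      = 8 * (1 + d₂ * c + d₁ * (2*c^2 - 1) + d₀ * (4*c^3 - 3*c)) := by
    simp [hM, hxdef, hydef, dotProduct, Matrix.mulVec, Fin.sum_univ_four]
    ring_nf
    linear_combination (4 - 4*d₁ - 8*c^2 + 16*c^2*d₁ + (64/3)*c^3*d₂ + 32*c^4) * hcs
  linarith

/-- If the 4×4 LMI matrix (central polynomial `c(z) = z³`) is positive definite, then
`d(z) = d₀ + d₁z + d₂z² + z³` is Schur stable. -/
theorem stmt17 (d₀ d₁ d₂ : ℝ)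
    (hPD : (!![(2 : ℝ), (4/3) * d₂, 2 * d₁, 4 * d₀;
               (4/3) * d₂, 2, (4/3) * d₂, 2 * d₁;
               2 * d₁, (4/3) * d₂, 2, (4/3) * d₂;
               4 * d₀, 2 * d₁, (4/3) * d₂, 2]).PosDef) :
    ∀ z : ℂ, z ^ 3 + (d₂ : ℂ) * z ^ 2 + (d₁ : ℂ) * z + (d₀ : ℂ) = 0 → ‖z‖ < 1 := by
  intro z hz
  by_contra hge
  push_neg at hge
  have hz0 : z ≠ 0 := by
    intro h; rw [h] at hge; simp at hge; linarith
  set g : ℂ → ℂ := fun w => (d₀ : ℂ) * w^3 + (d₁ : ℂ) * w^2 + (d₂ : ℂ) * w + 1 with hg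
  -- positivity of Re g on the unit circle
  have hcirc : ∀ w : ℂ, ‖w‖ = 1 → 0 < (g w).re := by
    intro w hw
    have hcs : w.re^2 + w.im^2 = 1 := by
      have := Complex.normSq_eq_norm_sq w
      rw [hw] at this
      simpa [Complex.normSq_apply, sq] using this
    have h := key17 d₀ d₁ d₂ w.re w.im hcs hPD
    have hre : (g w).re = 1 + d₂ * w.re + d₁ * (2*w.re^2 - 1) + d₀ * (4*w.re^3 - 3*w.re) := by
      simp [hg, pow_succ, Complex.mul_re, Complex.mul_im]
      ring_nf
      linear_combination (-d₁ - 3*d₀*w.re) * hcs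
    rw [hre]; exact h
  -- g (z⁻¹) = 0
  have hgu : g z⁻¹ = 0 := by
    have h3 : z^3 ≠ 0 := pow_ne_zero _ hz0
    rw [hg]
    field_simp
    linear_combination hz
  have hu : ‖(z⁻¹ : ℂ)‖ ≤ 1 := by
    rw [norm_inv]
    exact inv_le_one_of_one_le₀ hge
  have hgc : Continuous g := by rw [hg]; fun_prop
  have hgd : Differentiable ℂ g := by rw [hg]; fun_prop
  -- minimum of Re g on the sphere
  obtain ⟨w₀, hw₀, hmin⟩ := (isCompact_sphere (0:ℂ) 1).exists_isMinOn
    ⟨1, by simp⟩ ((Complex.continuous_re.comp hgc).continuousOn)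
  set m := (g w₀).re with hm
  have hmin' : ∀ w ∈ Metric.sphere (0:ℂ) 1, m ≤ (g w).re := fun w hw => hmin hw
  have hm0 : 0 < m := hcirc w₀ (by simpa using hw₀)
  -- maximum modulus principle for exp (-g)
  have hdiff : Differentiable ℂ fun w => Complex.exp (-(g w)) :=
    Complex.differentiable_exp.comp hgd.neg
  have hmax : ‖Complex.exp (-(g z⁻¹))‖ ≤ Real.exp (-m) := by
    apply Complex.norm_le_of_forall_mem_frontier_norm_le (Metric.isBounded_ball
      (x := (0:ℂ)) (r := 1)) hdiff.diffContOnCl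
    · intro w hw
      rw [frontier_ball (0:ℂ) one_ne_zero] at hw
      have hw1 : ‖w‖ = 1 := by simpa using hw
      rw [Complex.norm_exp]
      have : m ≤ (g w).re := hmin' w hw
      simp only [Complex.neg_re]
      exact Real.exp_le_exp.mpr (by linarith)
    · rw [closure_ball (0:ℂ) one_ne_zero]
      simpa using hu
  rw [hgu] at hmax
  simp at hmax
  have : Real.exp (-m) < 1 := Real.exp_lt_one_iff.mpr (by linarith)
  linarith
end
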